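/- An infinite word t over the two-letter alphabet {a, b} is non-recurrent with all of its factors balanced if and only if t is balanced and ultimately periodic but not periodic (i.e., t is a skew word). -/

import Mathlib

/-- The prefix of length `k` of an infinite word `t`. -/
def prefixList {A : Type*} (t : ℕ → A) (k : ℕ) : List A := (List.range k).map t

/-- `u` occurs as a factor of the infinite word `t` at position `i`. -/
def FactorAt {A : Type*} (t : ℕ → A) (u : List A) (i : ℕ) : Prop :=
  u = (List.range u.length).map (fun j => t (i + j))

/-- `u` is a (finite) factor of the infinite word `t`. -/
def IsFactorInf {A : Type*} (t : ℕ → A) (u : List A) : Prop := ∃ i, FactorAt t u i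

/-- An infinite word is recurrent if each of its factors occurs infinitely often. -/
def Recurrent {A : Type*} (t : ℕ → A) : Prop :=
  ∀ u, IsFactorInf t u → ∀ N, ∃ i, N ≤ i ∧ FactorAt t u i

/-- `u` is a right special factor of `t`. -/
def RightSpecial {A : Type*} (t : ℕ → A) (u : List A) : Prop :=
  ∃ a b : A, a ≠ b ∧ IsFactorInf t (u ++ [a]) ∧ IsFactorInf t (u ++ [b])

/-- `u` is a left special factor of `t`. -/
def LeftSpecial {A : Type*} (t : ℕ → A) (u : List A) : Prop :=
  ∃ a b : A, a ≠ b ∧ IsFactorInf t (a :: u) ∧ IsFactorInf t (b :: u)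

/-- An infinite word is episturmian if its set of factors is closed under reversal
and it has at most one right special factor of each length. -/
def Episturmian {A : Type*} (t : ℕ → A) : Prop :=
  (∀ u, IsFactorInf t u → IsFactorInf t u.reverse) ∧
  (∀ u v, RightSpecial t u → RightSpecial t v → u.length = v.length → u = v)

/-- A standard episturmian word: episturmian with all left special factors prefixes. -/
def StdEpisturmian {A : Type*} (t : ℕ → A) : Prop :=
  Episturmian t ∧ ∀ u, LeftSpecial t u → u = prefixList t u.length

/-- A finite word is finite episturmian if it is a factor of some episturmian infinite word. -/
def FiniteEpisturmian {A : Type*} (w : List A) : Prop :=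
  ∃ t : ℕ → A, Episturmian t ∧ IsFactorInf t w

/-- An acceptable pair: a strict total order `r` on `A` together with a letter `a`
that is minimal for `r`. -/
def AcceptablePair {A : Type*} (r : A → A → Prop) (a : A) : Prop :=
  IsStrictTotalOrder A r ∧ ∀ b, b ≠ a → r a b

/-- Non-strict lexicographic order on finite words induced by the order `r` on letters. -/
def listLe {A : Type*} (r : A → A → Prop) (u v : List A) : Prop := u = v ∨ List.Lex r u v

/-- Non-strict lexicographic order on infinite words induced by the order `r` on letters. -/
def infLe {A : Type*} (r : A → A → Prop) (x y : ℕ → A) : Prop :=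
  x = y ∨ ∃ i, (∀ j, j < i → x j = y j) ∧ r (x i) (y i)

/-- `m` is the lexicographically smallest factor of the finite word `w` of length `k`. -/
def IsMinFacLen {A : Type*} (r : A → A → Prop) (w : List A) (k : ℕ) (m : List A) : Prop :=
  m <:+: w ∧ m.length = k ∧ ∀ u, u <:+: w → u.length = k → listLe r m u

/-- `m` is the lexicographically greatest factor of the finite word `w` of length `k`. -/
def IsMaxFacLen {A : Type*} (r : A → A → Prop) (w : List A) (k : ℕ) (m : List A) : Prop :=
  m <:+: w ∧ m.length = k ∧ ∀ u, u <:+: w → u.length = k → listLe r u m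

/-- `m = min(w)`: for each `j ≤ |m|` the prefix of `m` of length `j` is `min(w|j)`,
and `|m|` is maximal with this chain property. -/
def IsMinFin {A : Type*} (r : A → A → Prop) (w m : List A) : Prop :=
  m ≠ [] ∧
  (∀ j, j ≤ m.length → IsMinFacLen r w j (m.take j)) ∧
  (∀ m', IsMinFacLen r w (m.length + 1) m' → ¬ m <+: m')

/-- `m = max(w)` (finite word version). -/
def IsMaxFin {A : Type*} (r : A → A → Prop) (w m : List A) : Prop :=
  m ≠ [] ∧
  (∀ j, j ≤ m.length → IsMaxFacLen r w j (m.take j)) ∧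
  (∀ m', IsMaxFacLen r w (m.length + 1) m' → ¬ m <+: m')

/-- `m = min(t)` for an infinite word `t`: each prefix of `m` is the lexicographically
smallest factor of `t` of its length. -/
def IsMinInf {A : Type*} (r : A → A → Prop) (t m : ℕ → A) : Prop :=
  ∀ k, IsFactorInf t (prefixList m k) ∧
    ∀ u, IsFactorInf t u → u.length = k → listLe r (prefixList m k) u

/-- `m = max(t)` for an infinite word `t`. -/
def IsMaxInf {A : Type*} (r : A → A → Prop) (t m : ℕ → A) : Prop :=
  ∀ k, IsFactorInf t (prefixList m k) ∧
    ∀ u, IsFactorInf t u → u.length = k → listLe r u (prefixList m k)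

/-- Prepend a letter to an infinite word. -/
def consInf {A : Type*} (a : A) (t : ℕ → A) : ℕ → A
  | 0 => a
  | n + 1 => t n

/-- Prepend a finite word to an infinite word. -/
def wordAppend {A : Type*} (v : List A) (t : ℕ → A) : ℕ → A :=
  fun n => if h : n < v.length then v.get ⟨n, h⟩ else t (n - v.length)

/-- The pure epistandard morphism `ψ_z` on finite words: it fixes `z` and sends
each letter `x ≠ z` to `zx`. -/
def psiW {A : Type*} [DecidableEq A] (z : A) (w : List A) : List A :=
  (w.map (fun x => if x = z then [z] else [z, x])).flatten

/-- The finite word `u` is a prefix of the infinite word `t`. -/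
def IsPrefixInf {A : Type*} (u : List A) (t : ℕ → A) : Prop := u = prefixList t u.length

/-- `y = f(t)`: the infinite word `y` is the image of the infinite word `t` under the
(non-erasing) morphism `f`, acting letter by letter. -/
def IsMorphImage {A : Type*} (f : List A → List A) (t y : ℕ → A) : Prop :=
  ∀ k, IsPrefixInf (f (prefixList t k)) y

/-- Pure epistandard morphisms: finite compositions of the morphisms `ψ_a`. -/
inductive PureEpistandard {A : Type*} [DecidableEq A] : (List A → List A) → Prop
  | id : PureEpistandard _root_.id
  | comp (a : A) (f : List A → List A) : PureEpistandard f →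
      PureEpistandard (fun w => psiW a (f w))

/-- An infinite word is episkew if it is non-recurrent and all of its factors
are finite episturmian. -/
def Episkew {A : Type*} (t : ℕ → A) : Prop :=
  ¬ Recurrent t ∧ ∀ u, IsFactorInf t u → FiniteEpisturmian u

/- Two-letter (Bool) notions: `false` plays the role of `a`, `true` of `b`,
with the order `false < true`. -/

/-- A finite binary word is balanced. -/
def BalancedList (w : List Bool) : Prop :=
  ∀ u v : List Bool, u <:+: w → v <:+: w → u.length = v.length →
    |(u.count true : ℤ) - (v.count true : ℤ)| ≤ 1

/-- An infinite binary word is balanced. -/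
def BalancedInf (t : ℕ → Bool) : Prop :=
  ∀ u v : List Bool, IsFactorInf t u → IsFactorInf t v → u.length = v.length →
    |(u.count true : ℤ) - (v.count true : ℤ)| ≤ 1

/-- The Sturmian word of slope `α` and intercept `ρ` defined via floors. -/
def SturmianFloor (α ρ : ℝ) (t : ℕ → Bool) : Prop :=
  ∀ n : ℕ, t n = true ↔ ⌊((n : ℝ) + 1) * α + ρ⌋ ≠ ⌊(n : ℝ) * α + ρ⌋

/-- The Sturmian word of slope `α` and intercept `ρ` defined via ceilings. -/
def SturmianCeil (α ρ : ℝ) (t : ℕ → Bool) : Prop :=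
  ∀ n : ℕ, t n = true ↔ ⌈((n : ℝ) + 1) * α + ρ⌉ ≠ ⌈(n : ℝ) * α + ρ⌉

/-- Aperiodic Sturmian words: those of irrational slope. -/
def IsAperiodicSturmian (t : ℕ → Bool) : Prop :=
  ∃ α ρ : ℝ, α ∈ Set.Icc (0 : ℝ) 1 ∧ ρ ∈ Set.Icc (0 : ℝ) 1 ∧ Irrational α ∧
    (SturmianFloor α ρ t ∨ SturmianCeil α ρ t)

/-- Standard Sturmian words: those with `ρ = α`. -/
def IsStandardSturmian (t : ℕ → Bool) : Prop :=
  ∃ α : ℝ, α ∈ Set.Icc (0 : ℝ) 1 ∧ (SturmianFloor α α t ∨ SturmianCeil α α t)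

/-- A fine infinite binary word: `(min(t), max(t)) = (a·s, b·s)` for some infinite word `s`. -/
def FineBool (t : ℕ → Bool) : Prop :=
  ∃ s : ℕ → Bool, IsMinInf (· < ·) t (consInf false s) ∧ IsMaxInf (· < ·) t (consInf true s)

/-- A periodic infinite word. -/
def PeriodicInf {A : Type*} (t : ℕ → A) : Prop := ∃ p, 0 < p ∧ ∀ i, t (i + p) = t i

/-- An ultimately periodic infinite word. -/
def UltPeriodicInf {A : Type*} (t : ℕ → A) : Prop :=
  ∃ p, 0 < p ∧ ∃ m, ∀ i, m ≤ i → t (i + p) = t i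

section Infra
variable {A : Type*}

/-- The factor of `t` of length `n` at position `i`. -/
def fac (t : ℕ → A) (i n : ℕ) : List A := (List.range n).map (fun j => t (i + j))

@[simp] lemma fac_length (t : ℕ → A) (i n : ℕ) : (fac t i n).length = n := by
  simp [fac]

lemma factorAt_iff_fac (t : ℕ → A) (u : List A) (i : ℕ) :
    FactorAt t u i ↔ u = fac t i u.length := Iff.rfl

lemma factorAt_fac (t : ℕ → A) (i n : ℕ) : FactorAt t (fac t i n) i := by
  show fac t i n = fac t i (fac t i n).length
  rw [fac_length]

lemma isFactorInf_fac (t : ℕ → A) (i n : ℕ) : IsFactorInf t (fac t i n) :=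
  ⟨i, factorAt_fac t i n⟩

lemma fac_add (t : ℕ → A) (i m n : ℕ) :
    fac t i (m + n) = fac t i m ++ fac t (i + m) n := by
  simp only [fac, List.range_add, List.map_append, List.map_map]
  congr 1
  apply List.map_congr_left
  intro j _
  simp [Nat.add_assoc]

lemma prefixList_eq_fac (t : ℕ → A) (n : ℕ) : prefixList t n = fac t 0 n := by
  simp [prefixList, fac]

@[simp] lemma prefixList_length (t : ℕ → A) (n : ℕ) : (prefixList t n).length = n := by
  simp [prefixList]

lemma fac_getElem (t : ℕ → A) (i n j : ℕ) (h : j < n) :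
    (fac t i n)[j]'(by simpa using h) = t (i + j) := by
  simp [fac]

lemma fac_one (t : ℕ → A) (i : ℕ) : fac t i 1 = [t i] := by
  simp [fac, List.range_succ]

lemma fac_succ (t : ℕ → A) (i n : ℕ) : fac t i (n + 1) = fac t i n ++ [t (i + n)] := by
  rw [fac_add, fac_one]

/-- An infix of a factor is a factor. -/
lemma isFactorInf_of_infix {t : ℕ → A} {u v : List A}
    (hv : IsFactorInf t v) (h : u <:+: v) : IsFactorInf t u := by
  obtain ⟨x, y, hxy⟩ := h
  obtain ⟨i, hi⟩ := hv
  rw [factorAt_iff_fac] at hi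
  subst hxy
  rw [show (x ++ u ++ y).length = x.length + (u.length + y.length) by
      simp [Nat.add_assoc], fac_add, fac_add] at hi
  rw [List.append_assoc] at hi
  have h1 := (List.append_inj hi (by simp)).2
  have h2 := (List.append_inj h1 (by simp)).1
  exact ⟨i + x.length, h2⟩

/-- A factor of length `n` at position `i` is an infix of any prefix of length `≥ i + n`. -/
lemma factor_infix_prefixList {t : ℕ → A} {u : List A} {i : ℕ} (h : FactorAt t u i)
    {m : ℕ} (hm : i + u.length ≤ m) : u <:+: prefixList t m := by
  rw [factorAt_iff_fac] at h
  rw [prefixList_eq_fac, show m = i + u.length + (m - i - u.length) by omega,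
    fac_add, fac_add]
  refine ⟨fac t 0 i, fac t (i + u.length) (m - i - u.length), ?_⟩
  simp only [Nat.zero_add]
  rw [← h]

lemma isFactorInf_prefixList (t : ℕ → A) (m : ℕ) : IsFactorInf t (prefixList t m) := by
  rw [prefixList_eq_fac]; exact isFactorInf_fac t 0 m

/-- Factors of a shifted word are factors. -/
lemma fac_shift (t : ℕ → A) (N i n : ℕ) : fac (fun m => t (N + m)) i n = fac t (N + i) n := by
  simp [fac, Nat.add_assoc]

lemma isFactorInf_shift {t : ℕ → A} {u : List A} (N : ℕ)
    (h : IsFactorInf (fun m => t (N + m)) u) : IsFactorInf t u := by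
  obtain ⟨i, hi⟩ := h
  rw [factorAt_iff_fac, fac_shift] at hi
  exact ⟨N + i, hi⟩

end Infra

section Balance

lemma balancedInf_iff_all (t : ℕ → Bool) :
    BalancedInf t ↔ ∀ u, IsFactorInf t u → BalancedList u := by
  constructor
  · intro hB u hu v w hv hw hlen
    exact hB v w (isFactorInf_of_infix hu hv) (isFactorInf_of_infix hu hw) hlen
  · intro hA u v hu hv hlen
    obtain ⟨i, hi⟩ := hu
    obtain ⟨j, hj⟩ := hv
    set m := max (i + u.length) (j + v.length) with hm
    refine hA (prefixList t m) (isFactorInf_prefixList t m) u v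
      (factor_infix_prefixList hi (le_max_left _ _))
      (factor_infix_prefixList hj (le_max_right _ _)) hlen

/-- A balanced infinite word cannot contain both `0w0` and `1w1`. -/
lemma no_0w0_1w1 {t : ℕ → Bool} (hB : BalancedInf t) (w : List Bool)
    (h0 : IsFactorInf t (false :: (w ++ [false])))
    (h1 : IsFactorInf t (true :: (w ++ [true]))) : False := by
  have := hB _ _ h0 h1 (by simp)
  rw [abs_le] at this
  simp [List.count_cons, List.count_append] at this

/-- In a balanced infinite binary word, right special factors of each length are unique. -/
lemma rightSpecial_unique {t : ℕ → Bool} (hB : BalancedInf t) {u v : List Bool}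
    (hu0 : IsFactorInf t (u ++ [false])) (hu1 : IsFactorInf t (u ++ [true]))
    (hv0 : IsFactorInf t (v ++ [false])) (hv1 : IsFactorInf t (v ++ [true]))
    (hlen : u.length = v.length) : u = v := by
  by_contra hne
  -- find the greatest index where u and v differ
  classical
  set n := u.length with hn
  set P : ℕ → Prop := fun m => u[m]? ≠ v[m]? with hP
  have hPd : DecidablePred P := fun m => inferInstanceAs (Decidable _)
  have hex : ∃ m, m ≤ n ∧ P m := by
    by_contra hall
    push_neg at hall
    apply hne
    apply List.ext_getElem?
    intro m
    by_cases hm : m ≤ n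
    · by_contra hc
      exact hall m hm hc
    · rw [List.getElem?_eq_none (by omega), List.getElem?_eq_none (by omega)]
  obtain ⟨m₀, hm₀n, hm₀⟩ := hex
  set k := Nat.findGreatest P n with hk
  have hPk : P k := Nat.findGreatest_spec hm₀n hm₀
  have hklt : k < n := by
    rcases Nat.lt_or_ge k n with h | h
    · exact h
    · exfalso
      apply hPk
      rw [List.getElem?_eq_none (by omega), List.getElem?_eq_none (by omega)]
  have hgt : ∀ m, k < m → u[m]? = v[m]? := by
    intro m hm
    by_cases hmn : m ≤ n
    · by_contra hc
      exact Nat.findGreatest_is_greatest hm hmn hc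
    · rw [List.getElem?_eq_none (by omega), List.getElem?_eq_none (by omega)]
  -- the common suffix
  have hdrop : u.drop (k + 1) = v.drop (k + 1) := by
    apply List.ext_getElem?
    intro m
    rw [List.getElem?_drop, List.getElem?_drop]
    exact hgt _ (by omega)
  have hku : k < u.length := by omega
  have hkv : k < v.length := by omega
  have hdu : u.drop k = u[k] :: u.drop (k + 1) := List.drop_eq_getElem_cons hku
  have hdv : v.drop k = v[k] :: v.drop (k + 1) := List.drop_eq_getElem_cons hkv
  have hne' : u[k] ≠ v[k] := by
    intro h
    apply hPk
    rw [List.getElem?_eq_getElem hku, List.getElem?_eq_getElem hkv, h]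
  have hsuf : ∀ (x : List Bool) (c : Bool) (k : ℕ),
      x.drop k ++ [c] <:+: x ++ [c] := by
    intro x c k
    obtain ⟨y, hy⟩ := List.drop_suffix k x
    exact List.IsSuffix.isInfix ⟨y, by rw [← List.append_assoc, hy]⟩
  have hu0' := isFactorInf_of_infix hu0 (hsuf u false k)
  have hu1' := isFactorInf_of_infix hu1 (hsuf u true k)
  have hv0' := isFactorInf_of_infix hv0 (hsuf v false k)
  have hv1' := isFactorInf_of_infix hv1 (hsuf v true k)
  set w := u.drop (k + 1) with hw
  rw [hdu] at hu0' hu1'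
  rw [hdv, ← hdrop] at hv0' hv1'
  cases huk : u[k] <;> cases hvk : v[k]
  · exact hne' (huk.trans hvk.symm)
  · rw [huk] at hu0'
    rw [hvk] at hv1'
    exact no_0w0_1w1 hB w (by simpa using hu0') (by simpa using hv1')
  · rw [huk] at hu1'
    rw [hvk] at hv0'
    exact no_0w0_1w1 hB w (by simpa using hv0') (by simpa using hu1')
  · exact hne' (huk.trans hvk.symm)

end Balance

section Counting

/-- The set of factors of `t` of length `n`. -/
def FactSet (t : ℕ → Bool) (n : ℕ) : Set (List Bool) :=
  {w | IsFactorInf t w ∧ w.length = n}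

lemma factSet_finite (t : ℕ → Bool) (n : ℕ) : (FactSet t n).Finite :=
  (List.finite_length_eq Bool n).subset (fun _ hw => hw.2)

lemma mem_factSet_fac (t : ℕ → Bool) (i n : ℕ) : fac t i n ∈ FactSet t n :=
  ⟨isFactorInf_fac t i n, fac_length t i n⟩

lemma factSet_exists_fac {t : ℕ → Bool} {n : ℕ} {w : List Bool} (hw : w ∈ FactSet t n) :
    ∃ i, w = fac t i n := by
  obtain ⟨⟨i, hi⟩, hlen⟩ := hw
  rw [factorAt_iff_fac, hlen] at hi
  exact ⟨i, hi⟩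

lemma dropLast_mem_factSet {t : ℕ → Bool} {n : ℕ} {w : List Bool}
    (hw : w ∈ FactSet t (n + 1)) : w.dropLast ∈ FactSet t n := by
  obtain ⟨i, rfl⟩ := factSet_exists_fac hw
  rw [fac_succ, List.dropLast_concat]
  exact mem_factSet_fac t i n

/-- `r` is a right special factor of `t` of length `n`. -/
def RSAt (t : ℕ → Bool) (n : ℕ) (r : List Bool) : Prop :=
  r.length = n ∧ IsFactorInf t (r ++ [false]) ∧ IsFactorInf t (r ++ [true])

/-- A `dropLast`-collision inside `FactSet t (n+1)` produces a right special factor. -/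
lemma collision_rs {t : ℕ → Bool} {n : ℕ} {w w' : List Bool}
    (hw : w ∈ FactSet t (n + 1)) (hw' : w' ∈ FactSet t (n + 1)) (hne : w ≠ w')
    (hdl : w.dropLast = w'.dropLast) : RSAt t n w.dropLast := by
  have hwnil : w ≠ [] := by intro h; rw [h] at hw; simp [FactSet] at hw
  have hw'nil : w' ≠ [] := by intro h; rw [h] at hw'; simp [FactSet] at hw'
  have hwe : w = w.dropLast ++ [w.getLast hwnil] := (List.dropLast_append_getLast hwnil).symm
  have hw'e : w' = w'.dropLast ++ [w'.getLast hw'nil] := (List.dropLast_append_getLast hw'nil).symm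
  have hlastne : w.getLast hwnil ≠ w'.getLast hw'nil := by
    intro h
    apply hne
    rw [hwe, hw'e, hdl, h]
  have hlen : w.dropLast.length = n := by
    have := hw.2
    rw [List.length_dropLast, this]; omega
  refine ⟨hlen, ?_, ?_⟩
  · cases hc : w.getLast hwnil
    · rw [← hc, ← hwe]; exact hw.1
    · have hc' : w'.getLast hw'nil = false := by
        cases hc2 : w'.getLast hw'nil
        · rfl
        · exact absurd (hc.trans hc2.symm) hlastne
      rw [hdl, ← hc', ← hw'e]; exact hw'.1
  · cases hc : w.getLast hwnil
    · have hc' : w'.getLast hw'nil = true := by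
        cases hc2 : w'.getLast hw'nil
        · exact absurd (hc.trans hc2.symm) hlastne
        · rfl
      rw [hdl, ← hc', ← hw'e]; exact hw'.1
    · rw [← hc, ← hwe]; exact hw.1

/-- A balanced infinite binary word has at most `n + 1` factors of length `n`. -/
lemma card_factSet_le {t : ℕ → Bool} (hB : BalancedInf t) (n : ℕ) :
    (FactSet t n).ncard ≤ n + 1 := by
  induction n with
  | zero =>
    have h : FactSet t 0 ⊆ {[]} := by
      intro w hw
      simpa [List.length_eq_zero_iff] using hw.2
    simpa using Set.ncard_le_ncard h (Set.finite_singleton _)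
  | succ n ih =>
    classical
    by_cases hrs : ∃ r, RSAt t n r
    · obtain ⟨r, hr⟩ := hrs
      set x : List Bool := r ++ [true] with hx
      have hinj : Set.InjOn List.dropLast (FactSet t (n + 1) \ {x}) := by
        intro w hw w' hw' hdl
        by_contra hne
        have h1 := collision_rs hw.1 hw'.1 hne hdl
        have heq : w.dropLast = r :=
          rightSpecial_unique hB h1.2.1 h1.2.2 hr.2.1 hr.2.2 (h1.1.trans hr.1.symm)
        have hwnil : w ≠ [] := by intro h; rw [h] at hw; simp [FactSet] at hw
        have hw'nil : w' ≠ [] := by intro h; rw [h] at hw'; simp [FactSet] at hw'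
        have hwe : w = r ++ [w.getLast hwnil] := by
          rw [← heq]; exact (List.dropLast_append_getLast hwnil).symm
        have hw'e : w' = r ++ [w'.getLast hw'nil] := by
          rw [← heq, hdl]; exact (List.dropLast_append_getLast hw'nil).symm
        have hlastne : w.getLast hwnil ≠ w'.getLast hw'nil := by
          intro h; exact hne (by rw [hwe, hw'e, h])
        cases hc : w.getLast hwnil
        · have hc' : w'.getLast hw'nil = true := by
            cases hc2 : w'.getLast hw'nil
            · exact absurd (hc.trans hc2.symm) hlastne
            · rfl
          exact hw'.2 (by rw [hx]; rw [hc'] at hw'e; simpa using hw'e)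
        · exact hw.2 (by rw [hx]; rw [hc] at hwe; simpa using hwe)
      have himg : List.dropLast '' (FactSet t (n + 1) \ {x}) ⊆ FactSet t n := by
        rintro _ ⟨w, hw, rfl⟩
        exact dropLast_mem_factSet hw.1
      have h1 : (FactSet t (n + 1) \ {x}).ncard ≤ n + 1 := by
        rw [← Set.ncard_image_of_injOn hinj]
        exact le_trans (Set.ncard_le_ncard himg (factSet_finite t n)) ih
      have h2 : (FactSet t (n + 1)).ncard ≤ (FactSet t (n + 1) \ {x}).ncard + 1 := by
        have hsub : FactSet t (n + 1) ⊆ (FactSet t (n + 1) \ {x}) ∪ {x} := by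
          intro w hw
          by_cases h : w = x
          · right; simp [h]
          · left; exact ⟨hw, h⟩
        calc (FactSet t (n + 1)).ncard
            ≤ ((FactSet t (n + 1) \ {x}) ∪ {x}).ncard :=
              Set.ncard_le_ncard hsub (((factSet_finite t (n+1)).diff).union (Set.finite_singleton _))
          _ ≤ (FactSet t (n + 1) \ {x}).ncard + ({x} : Set (List Bool)).ncard :=
              Set.ncard_union_le _ _
          _ = (FactSet t (n + 1) \ {x}).ncard + 1 := by rw [Set.ncard_singleton]
      omega
    · have hinj : Set.InjOn List.dropLast (FactSet t (n + 1)) := by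
        intro w hw w' hw' hdl
        by_contra hne
        exact hrs ⟨w.dropLast, collision_rs hw hw' hne hdl⟩
      have himg : List.dropLast '' (FactSet t (n + 1)) ⊆ FactSet t n := by
        rintro _ ⟨w, hw, rfl⟩
        exact dropLast_mem_factSet hw
      calc (FactSet t (n + 1)).ncard
          = (List.dropLast '' (FactSet t (n + 1))).ncard := (Set.ncard_image_of_injOn hinj).symm
        _ ≤ (FactSet t n).ncard := Set.ncard_le_ncard himg (factSet_finite t n)
        _ ≤ n + 1 := ih
        _ ≤ n + 2 := by omega

/-- A right special factor of length `n` forces at least one extra factor of length `n+1`. -/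
lemma card_factSet_succ_ge {s : ℕ → Bool} {n : ℕ} {r : List Bool} (hr : RSAt s n r) :
    (FactSet s n).ncard + 1 ≤ (FactSet s (n + 1)).ncard := by
  classical
  set x : List Bool := r ++ [true] with hx
  have hxm : x ∈ FactSet s (n + 1) := ⟨hr.2.2, by simp [hx, hr.1]⟩
  have hsub : FactSet s n ⊆ List.dropLast '' (FactSet s (n + 1) \ {x}) := by
    intro v hv
    obtain ⟨i, rfl⟩ := factSet_exists_fac hv
    by_cases hvx : fac s i (n + 1) = x
    · have hvr : fac s i n = r := by
        have h := congrArg List.dropLast hvx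
        rwa [fac_succ, List.dropLast_concat, hx, List.dropLast_concat] at h
      refine ⟨r ++ [false], ⟨⟨hr.2.1, by simp [hr.1]⟩, ?_⟩, ?_⟩
      · simp [hx]
      · rw [List.dropLast_concat, hvr]
    · exact ⟨fac s i (n + 1), ⟨mem_factSet_fac s i (n + 1), hvx⟩,
        by rw [fac_succ, List.dropLast_concat]⟩
  have h1 : (FactSet s n).ncard ≤ (FactSet s (n + 1) \ {x}).ncard :=
    le_trans (Set.ncard_le_ncard hsub (Set.Finite.image _ ((factSet_finite s (n+1)).diff)))
      (Set.ncard_image_le ((factSet_finite s (n+1)).diff))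
  have h2 : (FactSet s (n + 1) \ {x}).ncard + 1 = (FactSet s (n + 1)).ncard :=
    Set.ncard_diff_singleton_add_one hxm (factSet_finite s (n+1))
  omega

/-- If there are right special factors of every length below `n`, there are at
least `n + 1` factors of length `n`. -/
lemma card_factSet_ge {s : ℕ → Bool} {n : ℕ} (h : ∀ k < n, ∃ r, RSAt s k r) :
    n + 1 ≤ (FactSet s n).ncard := by
  induction n with
  | zero =>
    have : (FactSet s 0).Nonempty := ⟨fac s 0 0, mem_factSet_fac s 0 0⟩
    have := (Set.ncard_pos (factSet_finite s 0)).mpr this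
    omega
  | succ n ih =>
    obtain ⟨r, hr⟩ := h n (by omega)
    have h1 := ih (fun k hk => h k (by omega))
    have h2 := card_factSet_succ_ge hr
    omega

end Counting

section Assembly
variable {A : Type*}

lemma fac_eq_iff (t : ℕ → A) (a b n : ℕ) :
    fac t a n = fac t b n ↔ ∀ m < n, t (a + m) = t (b + m) := by
  constructor
  · intro h m hm
    have := congrArg (fun l => l[m]?) h
    rw [List.getElem?_eq_getElem (by simpa using hm), List.getElem?_eq_getElem (by simpa using hm),
      fac_getElem t a n m hm, fac_getElem t b n m hm] at this
    exact Option.some_injective _ this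
  · intro h
    apply List.ext_getElem (by simp)
    intro m hm1 hm2
    rw [fac_getElem t a n m (by simpa using hm1), fac_getElem t b n m (by simpa using hm1)]
    exact h m (by simpa using hm1)

lemma recurrent_of_periodic {t : ℕ → A} (h : PeriodicInf t) : Recurrent t := by
  obtain ⟨p, hp, hper⟩ := h
  have hstep : ∀ x k, t (x + k * p) = t x := by
    intro x k
    induction k with
    | zero => simp
    | succ k ih =>
      have : x + (k + 1) * p = (x + k * p) + p := by ring
      rw [this, hper, ih]
  intro u hu N
  obtain ⟨i, hi⟩ := hu
  refine ⟨i + N * p, ?_, ?_⟩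
  · have : N ≤ N * p := Nat.le_mul_of_pos_right N hp
    omega
  · rw [factorAt_iff_fac] at hi ⊢
    rw [hi, fac_length, fac_eq_iff]
    intro m hm
    have h1 : i + N * p + m = (i + m) + N * p := by ring
    rw [h1, hstep]

lemma periodic_of_recurrent_ultPeriodic {t : ℕ → A} (hR : Recurrent t)
    (h : UltPeriodicInf t) : PeriodicInf t := by
  obtain ⟨p, hp, m, hm⟩ := h
  refine ⟨p, hp, fun j => ?_⟩
  set L := j + p + 1 with hL
  have hpre : IsFactorInf t (fac t 0 L) := isFactorInf_fac t 0 L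
  obtain ⟨i, him, hi⟩ := hR _ hpre m
  rw [factorAt_iff_fac, fac_length] at hi
  have key : ∀ x < L, t x = t (i + x) := by
    intro x hx
    have := (fac_eq_iff t 0 i L).mp hi x hx
    simpa using this
  have h1 : t j = t (i + j) := key j (by omega)
  have h2 : t (j + p) = t (i + (j + p)) := key (j + p) (by omega)
  have h3 : t ((i + j) + p) = t (i + j) := hm (i + j) (by omega)
  rw [h2, show i + (j + p) = (i + j) + p by ring, h3, ← h1]

/-- The key step: a balanced infinite binary word in which some nonempty factor
eventually stops occurring is ultimately periodic. -/
lemma ultPeriodic_of_missing {t : ℕ → Bool} (hB : BalancedInf t) {u : List Bool} {N : ℕ}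
    (hu : IsFactorInf t u) (hN : ∀ i, N ≤ i → ¬ FactorAt t u i) (hne : u ≠ []) :
    UltPeriodicInf t := by
  classical
  set s : ℕ → Bool := fun m => t (N + m) with hs
  set n := u.length with hn
  have hn1 : 1 ≤ n := by
    rw [hn, Nat.one_le_iff_ne_zero]
    simpa using hne
  -- factors of s are factors of t
  have hshift : ∀ w, IsFactorInf s w → IsFactorInf t w := fun w hw => isFactorInf_shift N hw
  -- u is not a factor of s
  have hus : ∀ w ∈ FactSet s n, w ≠ u := by
    rintro w ⟨⟨i, hi⟩, hlen⟩ rfl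
    rw [factorAt_iff_fac, hs, fac_shift] at hi
    exact hN (N + i) (by omega) hi
  have hsubt : ∀ k, FactSet s k ⊆ FactSet t k := fun k w hw => ⟨hshift w hw.1, hw.2⟩
  -- card bound for FactSet s n
  have hcard : (FactSet s n).ncard ≤ n := by
    have hsub : FactSet s n ⊆ FactSet t n \ {u} := fun w hw => ⟨hsubt n hw, hus w hw⟩
    have hu' : u ∈ FactSet t n := ⟨hu, rfl⟩
    have h1 : (FactSet t n \ {u}).ncard + 1 = (FactSet t n).ncard :=
      Set.ncard_diff_singleton_add_one hu' (factSet_finite t n)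
    have h2 := Set.ncard_le_ncard hsub ((factSet_finite t n).diff)
    have h3 := card_factSet_le hB n
    omega
  -- some level k < n has no right special factor of s
  have hlevel : ∃ k < n, ¬ ∃ r, RSAt s k r := by
    by_contra h
    push_neg at h
    have := card_factSet_ge (s := s) (n := n) (fun k hk => h k hk)
    omega
  obtain ⟨k, hkn, hnrs⟩ := hlevel
  rcases Nat.eq_zero_or_pos k with hk0 | hkpos
  · -- k = 0 : s is constant
    subst hk0
    have hfactor : ∀ i, IsFactorInf s [s i] := by
      intro i
      refine ⟨i, ?_⟩
      rw [factorAt_iff_fac]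
      simp [fac_one]
    have hconst : ∀ i, s i = s 0 := by
      intro i
      by_contra hc
      have hf : IsFactorInf s [false] ∧ IsFactorInf s [true] := by
        cases hsi : s i <;> cases hs0 : s 0
        · exact absurd (hsi.trans hs0.symm) hc
        · exact ⟨by rw [← hsi]; exact hfactor i, by rw [← hs0]; exact hfactor 0⟩
        · exact ⟨by rw [← hs0]; exact hfactor 0, by rw [← hsi]; exact hfactor i⟩
        · exact absurd (hsi.trans hs0.symm) hc
      exact hnrs ⟨[], rfl, by simpa using hf.1, by simpa using hf.2⟩
    refine ⟨1, one_pos, N, fun m hm => ?_⟩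
    have e1 : t (m + 1) = s (m + 1 - N) := by rw [hs]; simp only []; congr 1; omega
    have e2 : t m = s (m - N) := by rw [hs]; simp only []; congr 1; omega
    rw [e1, e2, hconst, hconst (m - N)]
  · -- pigeonhole on positions 0..n
    have hck : (FactSet s k).ncard ≤ n := by
      have h1 := Set.ncard_le_ncard (hsubt k) (factSet_finite t k)
      have h2 := card_factSet_le hB k
      omega
    have hmaps : ∀ i ∈ Finset.range (n + 1), fac s i k ∈ (factSet_finite s k).toFinset := by
      intro i _
      rw [Set.Finite.mem_toFinset]
      exact mem_factSet_fac s i k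
    have hcards : ((factSet_finite s k).toFinset).card < (Finset.range (n + 1)).card := by
      rw [Finset.card_range, ← Set.ncard_eq_toFinset_card (FactSet s k) (factSet_finite s k)]
      omega
    obtain ⟨i₀, -, j₀, -, hne', hfac⟩ :=
      Finset.exists_ne_map_eq_of_card_lt_of_maps_to hcards hmaps
    -- wlog i < j
    set i := min i₀ j₀ with hi
    set j := max i₀ j₀ with hj
    have hij : i < j := by
      rcases lt_or_gt_of_ne hne' with h | h
      · rw [hi, hj, min_eq_left h.le, max_eq_right h.le]; exact h
      · rw [hi, hj, min_eq_right h.le, max_eq_left h.le]; exact h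
    have hfij : fac s i k = fac s j k := by
      rcases le_total i₀ j₀ with h | h
      · rw [hi, hj, min_eq_left h, max_eq_right h]; exact hfac
      · rw [hi, hj, min_eq_right h, max_eq_left h]; exact hfac.symm
    -- unique right extension at level k
    have key : ∀ a b, fac s a k = fac s b k → s (a + k) = s (b + k) := by
      intro a b hab
      by_contra hc
      apply hnrs
      refine ⟨fac s a k, fac_length s a k, ?_, ?_⟩
      all_goals {
        rcases Bool.eq_false_or_eq_true (s (a + k)) with h | h <;>
        rcases Bool.eq_false_or_eq_true (s (b + k)) with h0 | h0
        all_goals first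
          | (exact absurd (h.trans h0.symm) hc)
          | (refine ⟨a, ?_⟩
             rw [factorAt_iff_fac, ← h]
             rw [show (fac s a k ++ [s (a + k)]).length = k + 1 by simp, ← fac_succ])
          | (refine ⟨b, ?_⟩
             rw [factorAt_iff_fac, ← h0]
             rw [show (fac s a k ++ [s (b + k)]).length = k + 1 by simp, hab, ← fac_succ])
      }
    -- propagate
    have prop : ∀ d, fac s (i + d) k = fac s (j + d) k := by
      intro d
      induction d with
      | zero => simpa using hfij
      | succ d ih =>
        have hlet : s (i + d + k) = s (j + d + k) := key _ _ ih
        rw [fac_eq_iff] at ih ⊢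
        intro m hm
        rcases Nat.lt_or_ge (m + 1) k with h | h
        · have := ih (m + 1) h
          rw [show i + (d + 1) + m = i + d + (m + 1) by ring,
            show j + (d + 1) + m = j + d + (m + 1) by ring]
          exact this
        · have hmk : m + 1 = k := by omega
          rw [show i + (d + 1) + m = i + d + k by omega,
            show j + (d + 1) + m = j + d + k by omega]
          exact hlet
    have hsper : ∀ d, s (i + d) = s (j + d) := by
      intro d
      have := (fac_eq_iff s (i + d) (j + d) k).mp (prop d) 0 (by omega)
      simpa using this
    refine ⟨j - i, by omega, N + i, fun m hm => ?_⟩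
    have hd : m = N + (i + (m - (N + i))) := by omega
    have h1 : t m = s (i + (m - (N + i))) := by rw [hs]; simp only []; rw [← hd]
    have h2 : t (m + (j - i)) = s (j + (m - (N + i))) := by
      rw [hs]; simp only []
      congr 1
      omega
    rw [h1, h2, hsper]
end Assembly

/-- An infinite binary word `t` is non-recurrent with all of its factors
balanced iff `t` is balanced and ultimately periodic but not periodic (i.e., skew). -/
theorem skew_iff_nonrecurrent_balanced (t : ℕ → Bool) :
    (¬ Recurrent t ∧ ∀ u, IsFactorInf t u → BalancedList u) ↔
      (BalancedInf t ∧ UltPeriodicInf t ∧ ¬ PeriodicInf t) := by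
  constructor
  · rintro ⟨hnr, hbal⟩
    have hB : BalancedInf t := (balancedInf_iff_all t).mpr hbal
    have hnp : ¬ PeriodicInf t := fun hP => hnr (recurrent_of_periodic hP)
    rw [Recurrent] at hnr
    push_neg at hnr
    obtain ⟨u, hu, N, hN⟩ := hnr
    have hne : u ≠ [] := by
      rintro rfl
      exact hN N le_rfl (by rw [factorAt_iff_fac]; simp [fac])
    exact ⟨hB, ultPeriodic_of_missing hB hu hN hne, hnp⟩
  · rintro ⟨hB, hUP, hnP⟩
    exact ⟨fun hR => hnP (periodic_of_recurrent_ultPeriodic hR hUP),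
      (balancedInf_iff_all t).mp hB⟩
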